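/- Let α, β be real numbers with 1 < α < β and define S_{α,β} := { r ∈ ℚ_{>0} : r ∈ (β^{-1}, α^{-1}) ∪ (α, β) }. Then the chromatic number of the graph G(S_{α,β}) is at most ⌈log(αβ)/log(α)⌉. -/

import Mathlib

open MeasureTheory Filter

/-- The graph `G(R)` on the positive integers where distinct `m`, `n` are adjacent
iff `m/n ∈ R` or `n/m ∈ R`. -/
def graphOf (R : Set ℚ) : SimpleGraph ℕ+ where
  Adj m n := m ≠ n ∧ (((m : ℚ) / (n : ℚ)) ∈ R ∨ ((n : ℚ) / (m : ℚ)) ∈ R)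
  symm := ⟨fun _ _ h => ⟨h.1.symm, h.2.symm⟩⟩
  loopless := ⟨fun _ h => h.1 rfl⟩

theorem chromatic_bound_archimedean
    (α β : ℝ) (hα : 1 < α) (hαβ : α < β) :
    (graphOf {r : ℚ | 0 < r ∧
        ((r : ℝ) ∈ Set.Ioo β⁻¹ α⁻¹ ∨ (r : ℝ) ∈ Set.Ioo α β)}).chromaticNumber
      ≤ (⌈Real.log (α * β) / Real.log α⌉₊ : ℕ∞) := by
  set k := ⌈Real.log (α * β) / Real.log α⌉₊ with hkdef
  have hα0 : (0:ℝ) < α := lt_trans one_pos hα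
  have hβ0 : (0:ℝ) < β := lt_trans hα0 hαβ
  have hlogα : 0 < Real.log α := Real.log_pos hα
  have hkle : Real.log (α * β) / Real.log α ≤ (k : ℝ) := Nat.le_ceil _
  have hkpos : 0 < k := Nat.ceil_pos.mpr (by
    apply div_pos _ hlogα
    apply Real.log_pos
    nlinarith)
  haveI : NeZero k := ⟨hkpos.ne'⟩
  -- key: if the real ratio m/n is in (α, β), the colors differ
  have key : ∀ m n : ℕ+, α < (m:ℝ)/(n:ℝ) → (m:ℝ)/(n:ℝ) < β →
      ((⌊Real.log (m:ℝ) / Real.log α⌋ : ℤ) : ZMod k) ≠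
        ((⌊Real.log (n:ℝ) / Real.log α⌋ : ℤ) : ZMod k) := by
    intro m n h1 h2 heq
    set a := ⌊Real.log (m:ℝ) / Real.log α⌋ with ha
    set b := ⌊Real.log (n:ℝ) / Real.log α⌋ with hb
    have hm : (0:ℝ) < (m:ℝ) := by exact_mod_cast m.pos
    have hn : (0:ℝ) < (n:ℝ) := by exact_mod_cast n.pos
    have hlog : Real.log ((m:ℝ)/(n:ℝ)) = Real.log m - Real.log n :=
      Real.log_div hm.ne' hn.ne'
    have hlo : Real.log α < Real.log m - Real.log n := by
      rw [← hlog]; exact Real.log_lt_log hα0 h1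
    have hhi : Real.log m - Real.log n < Real.log β := by
      rw [← hlog]; exact Real.log_lt_log (lt_trans hα0 h1) h2
    -- lower bound: b + 1 ≤ a
    have hd : Real.log m / Real.log α - Real.log n / Real.log α
        = (Real.log m - Real.log n) / Real.log α := by ring
    have hgt1 : 1 < Real.log m / Real.log α - Real.log n / Real.log α := by
      rw [hd]
      exact (one_lt_div hlogα).mpr hlo
    have hab1 : b + 1 ≤ a := by
      have : Real.log n / Real.log α + 1 ≤ Real.log m / Real.log α := by linarith
      calc b + 1 = ⌊Real.log n / Real.log α + 1⌋ := by
            rw [Int.floor_add_one]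
        _ ≤ a := Int.floor_le_floor this
    -- upper bound: a - b < k
    have hub : Real.log m / Real.log α - Real.log n / Real.log α
        < Real.log β / Real.log α := by
      rw [hd]
      gcongr
    have hlogab : Real.log (α * β) = Real.log α + Real.log β :=
      Real.log_mul hα0.ne' hβ0.ne'
    have hak : (a : ℝ) < (b : ℝ) + k := by
      have h1' : (a:ℝ) ≤ Real.log m / Real.log α := Int.floor_le _
      have h2' : Real.log n / Real.log α < (b:ℝ) + 1 := Int.lt_floor_add_one _
      have h3' : Real.log β / Real.log α + 1 ≤ (k:ℝ) := by
        rw [hlogab] at hkle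
        have he : (Real.log α + Real.log β) / Real.log α
            = Real.log β / Real.log α + 1 := by field_simp; ring
        linarith [he ▸ hkle]
      linarith
    have hak' : a - b < (k:ℤ) := by exact_mod_cast (by linarith : (a:ℝ) - b < (k:ℝ))
    have hdvd : (k:ℤ) ∣ a - b :=
      dvd_sub_comm.mp ((ZMod.intCast_eq_intCast_iff _ _ _).mp heq).dvd
    have := Int.le_of_dvd (by omega) hdvd
    omega
  -- build the coloring
  have hvalid : ∀ m n : ℕ+,
      (graphOf {r : ℚ | 0 < r ∧
        ((r : ℝ) ∈ Set.Ioo β⁻¹ α⁻¹ ∨ (r : ℝ) ∈ Set.Ioo α β)}).Adj m n →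
      ((⌊Real.log (m:ℝ) / Real.log α⌋ : ℤ) : ZMod k) ≠
        ((⌊Real.log (n:ℝ) / Real.log α⌋ : ℤ) : ZMod k) := by
    intro m n hadj
    obtain ⟨hne, hmem⟩ := hadj
    have hm : (0:ℝ) < (m:ℝ) := by exact_mod_cast m.pos
    have hn : (0:ℝ) < (n:ℝ) := by exact_mod_cast n.pos
    have hcast : (((m:ℚ)/(n:ℚ) : ℚ) : ℝ) = (m:ℝ)/(n:ℝ) := by push_cast; ring
    have hcast' : (((n:ℚ)/(m:ℚ) : ℚ) : ℝ) = (n:ℝ)/(m:ℝ) := by push_cast; ring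
    have inv_case : ∀ x y : ℝ, 0 < x → 0 < y → β⁻¹ < x / y → x / y < α⁻¹ →
        α < y / x ∧ y / x < β := by
      intro x y hx hy hl hr
      constructor
      · have hx' : x < α⁻¹ * y := (div_lt_iff₀ hy).mp hr
        have hax : α * x < y := by
          have := mul_lt_mul_of_pos_left hx' hα0
          rwa [← mul_assoc, mul_inv_cancel₀ hα0.ne', one_mul] at this
        exact (lt_div_iff₀ hx).mpr hax
      · have hx2 : β⁻¹ * y < x := (lt_div_iff₀ hy).mp hl
        have hby : y < β * x := by
          have := mul_lt_mul_of_pos_left hx2 hβ0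
          rwa [← mul_assoc, mul_inv_cancel₀ hβ0.ne', one_mul] at this
        exact (div_lt_iff₀ hx).mpr hby
    rcases hmem with ⟨_, hio⟩ | ⟨_, hio⟩
    · rcases hio with ⟨hl, hr⟩ | ⟨hl, hr⟩
      · rw [hcast] at hl hr
        obtain ⟨h1, h2⟩ := inv_case _ _ hm hn hl hr
        exact (key n m h1 h2).symm
      · rw [hcast] at hl hr
        exact key m n hl hr
    · rcases hio with ⟨hl, hr⟩ | ⟨hl, hr⟩
      · rw [hcast'] at hl hr
        obtain ⟨h1, h2⟩ := inv_case _ _ hn hm hl hr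
        exact key m n h1 h2
      · rw [hcast'] at hl hr
        exact (key n m hl hr).symm
  let C : SimpleGraph.Coloring (graphOf {r : ℚ | 0 < r ∧
        ((r : ℝ) ∈ Set.Ioo β⁻¹ α⁻¹ ∨ (r : ℝ) ∈ Set.Ioo α β)}) (ZMod k) :=
    SimpleGraph.Coloring.mk
      (fun n => ((⌊Real.log (n:ℝ) / Real.log α⌋ : ℤ) : ZMod k))
      (fun {m n} h => hvalid m n h)
  have hcol := C.colorable
  rw [ZMod.card] at hcol
  exact hcol.chromaticNumber_le
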